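/- Let X = X₀·U² and Y = Y₀, where X₀ = [[0,1,0],[1,0,0],[0,0,t]], Y₀ = [[1,0,0],[0,0,1],[0,t,0]], and U = [[0,0,t⁻¹],[1,0,0],[0,t,0]] over ℤ[t,t⁻¹]. Then for every integer i ≥ 1, Y^i · X ≠ X · Y^i. -/

import Mathlib

open Matrix LaurentPolynomial

lemma myT_inj {m n : ℤ} (h : (T m : LaurentPolynomial ℤ) = T n) : m = n :=
  by
    by_contra hne
    have := congrArg (fun p : LaurentPolynomial ℤ => p.coeff m) h
    simp [T_apply, Ne.symm hne] at this

lemma myT_ne_zero (n : ℤ) : (T n : LaurentPolynomial ℤ) ≠ 0 := fun h => by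
  have := congrArg (fun p : LaurentPolynomial ℤ => p.coeff n) h
  simp [T_apply] at this

lemma myT1 : (T (-1) * T 1 : LaurentPolynomial ℤ) = 1 := by rw [← T_add]; norm_num
lemma myT2 : (T 1 * T (-1) : LaurentPolynomial ℤ) = 1 := by rw [← T_add]; norm_num
lemma myT3 : (T 1 * T 1 : LaurentPolynomial ℤ) = T 2 := by rw [← T_add]; norm_num
lemma myT4 (n : ℤ) : (T n * T 1 : LaurentPolynomial ℤ) = T (n + 1) := (T_add n 1).symm
lemma myT5 (n : ℤ) : (T n * T 2 : LaurentPolynomial ℤ) = T (n + 2) := (T_add n 2).symm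

/-- Case (b): X = X₀·U², Y = Y₀.  Then Y^i · X ≠ X · Y^i for every i ≥ 1. -/
theorem stmt6 :
    let X₀ : Matrix (Fin 3) (Fin 3) (LaurentPolynomial ℤ) := !![0, 1, 0; 1, 0, 0; 0, 0, T 1]
    let Y₀ : Matrix (Fin 3) (Fin 3) (LaurentPolynomial ℤ) := !![1, 0, 0; 0, 0, 1; 0, T 1, 0]
    let U : Matrix (Fin 3) (Fin 3) (LaurentPolynomial ℤ) := !![0, 0, T (-1); 1, 0, 0; 0, T 1, 0]
    let X := X₀ * U ^ 2
    let Y := Y₀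
    ∀ i : ℕ, 1 ≤ i → Y ^ i * X ≠ X * Y ^ i := by
  show ∀ i : ℕ, 1 ≤ i →
      (!![1, 0, 0; 0, 0, 1; 0, T 1, 0] : Matrix (Fin 3) (Fin 3) (LaurentPolynomial ℤ)) ^ i *
        (!![0, 1, 0; 1, 0, 0; 0, 0, T 1] * !![0, 0, T (-1); 1, 0, 0; 0, T 1, 0] ^ 2) ≠
      (!![0, 1, 0; 1, 0, 0; 0, 0, T 1] * !![0, 0, T (-1); 1, 0, 0; 0, T 1, 0] ^ 2) *
        !![1, 0, 0; 0, 0, 1; 0, T 1, 0] ^ i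
  intro i hi
  have hU2 : (!![0, 0, T (-1); 1, 0, 0; 0, T 1, 0] : Matrix (Fin 3) (Fin 3)
      (LaurentPolynomial ℤ)) ^ 2 = !![0, 1, 0; 0, 0, T (-1); T 1, 0, 0] := by
    rw [pow_two, Matrix.mul_fin_three]
    simp only [one_mul, mul_one, zero_mul, mul_zero, add_zero, zero_add, myT1, myT2]
  have hX : (!![0, 1, 0; 1, 0, 0; 0, 0, T 1] : Matrix (Fin 3) (Fin 3) (LaurentPolynomial ℤ)) *
      !![0, 0, T (-1); 1, 0, 0; 0, T 1, 0] ^ 2 = !![0, 0, T (-1); 0, 1, 0; T 2, 0, 0] := by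
    rw [hU2, Matrix.mul_fin_three]
    simp only [one_mul, mul_one, zero_mul, mul_zero, add_zero, zero_add, myT3]
  rw [hX]
  have hY2 : (!![1, 0, 0; 0, 0, 1; 0, T 1, 0] : Matrix (Fin 3) (Fin 3)
      (LaurentPolynomial ℤ)) ^ 2 = !![1, 0, 0; 0, T 1, 0; 0, 0, T 1] := by
    rw [pow_two, Matrix.mul_fin_three]
    simp only [one_mul, mul_one, zero_mul, mul_zero, add_zero, zero_add]
  have hYeven : ∀ k : ℕ, (!![1, 0, 0; 0, 0, 1; 0, T 1, 0] : Matrix (Fin 3) (Fin 3)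
      (LaurentPolynomial ℤ)) ^ (2 * k) = !![1, 0, 0; 0, T k, 0; 0, 0, T k] := by
    intro k
    induction k with
    | zero =>
      rw [mul_zero, pow_zero, Matrix.one_fin_three]
      norm_num
    | succ n ih =>
      have h2 : 2 * (n + 1) = 2 * n + 2 := by ring
      rw [h2, pow_add, ih, hY2, Matrix.mul_fin_three]
      simp only [one_mul, mul_one, zero_mul, mul_zero, add_zero, zero_add, myT4]
      push_cast
      rfl
  rcases Nat.even_or_odd i with ⟨k, hk⟩ | ⟨k, hk⟩
  · -- i = 2k, k ≥ 1
    have hk' : i = 2 * k := by omega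
    have hkpos : 1 ≤ k := by omega
    rw [hk', hYeven, Matrix.mul_fin_three, Matrix.mul_fin_three]
    simp only [one_mul, mul_one, zero_mul, mul_zero, add_zero, zero_add, myT5]
    intro h
    have h20 : (T ((k : ℤ) + 2) : LaurentPolynomial ℤ) = T 2 := congrFun (congrFun h 2) 0
    have := myT_inj h20
    omega
  · -- i = 2k + 1
    have hYodd : (!![1, 0, 0; 0, 0, 1; 0, T 1, 0] : Matrix (Fin 3) (Fin 3)
        (LaurentPolynomial ℤ)) ^ i = !![1, 0, 0; 0, 0, T k; 0, T ((k : ℤ) + 1), 0] := by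
      rw [hk, pow_add, pow_one, hYeven, Matrix.mul_fin_three]
      simp only [one_mul, mul_one, zero_mul, mul_zero, add_zero, zero_add, myT4]
    rw [hYodd, Matrix.mul_fin_three, Matrix.mul_fin_three]
    simp only [one_mul, mul_one, zero_mul, mul_zero, add_zero, zero_add, myT5]
    intro h
    have h20 : (0 : LaurentPolynomial ℤ) = T 2 := congrFun (congrFun h 2) 0
    exact myT_ne_zero 2 h20.symm
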